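/- Let (U, U^ι) be a quantum symmetric pair of finite type, (M, B^ι) a based U^ι-module, (N, B) a finite-dimensional based U-module, and ψ_ι = Θ^ι ∘ (ψ_ι ⊗ ψ) the bar involution on M ⊗ N. Then for b₁ ∈ B^ι and b₂ ∈ B, ψ_ι(b₁ ⊗ b₂) ∈ b₁ ⊗ b₂ + Σ ℤ[q,q^{-1}]·b₁' ⊗ b₂', the sum over pairs (b₁', b₂') ∈ B^ι × B with |b₂'| < |b₂| in the partial order μ' < μ iff μ' − μ ∈ ℕ𝕀. -/

import Mathlib

/-!
Statement 7 (Bao–Wang–Watanabe, equation (2.5)).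

With `(M, B^ι)` a based `U^ι`-module, `(N, B)` a finite-dimensional based `U`-module
and `ψ_ι = Θ^ι ∘ (ψ_ι ⊗ ψ)` the bar involution on `M ⊗ N`: for `b₁ ∈ B^ι`, `b₂ ∈ B`,
`ψ_ι(b₁ ⊗ b₂) ∈ b₁ ⊗ b₂ + Σ ℤ[q,q⁻¹]·b₁' ⊗ b₂'`, the sum over pairs
`(b₁', b₂') ∈ B^ι × B` with `|b₂'| < |b₂|` in the partial order
`μ' < μ` iff `μ' − μ ∈ ℕ𝕀`.

The modelling conventions are as in Statement 0; the hypotheses record that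
`Θ^ι = Σ_μ Θ^ι_μ` with `Θ^ι_μ ∈ U^ι ⊗ U⁺_μ` integral and `Θ^ι_0 = 1 ⊗ 1`.
-/

open scoped TensorProduct

noncomputable section

/-- The base field `ℚ(q)`. -/
abbrev Fq : Type := RatFunc ℚ

/-- The variable `q ∈ ℚ(q)`. -/
def qq : Fq := RatFunc.X

/-- The subring `ℤ[q⁻¹] ⊆ ℚ(q)`. -/
def ZqInv : Subring Fq := Subring.closure {qq⁻¹}

/-- The set `q⁻¹ ℤ[q⁻¹] ⊆ ℚ(q)`. -/
def qInvZqInv : Set Fq := {x | ∃ y ∈ ZqInv, x = qq⁻¹ * y}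

/-- The subring `ℤ[q, q⁻¹] ⊆ ℚ(q)`. -/
def LaurentZ : Subring Fq := Subring.closure {qq, qq⁻¹}

/-- The partial order on the weight lattice `X`: `μ' < μ` iff `μ' - μ ∈ ℕ𝕀` is nonzero. -/
def wtLT {I : Type} (μ' μ : I →₀ ℤ) : Prop := (∀ i, μ i ≤ μ' i) ∧ μ' ≠ μ

theorem statement_7
    -- the weight lattice `X = ℤ𝕀` of the root datum `(𝕀, ·)` of finite type
    (I : Type) [Fintype I]
    -- a based `U^ι`-module `(M, B^ι)` and a finite-dimensional based `U`-module `(N, B)`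
    (ιM ιN : Type) [Finite ιM] [Finite ιN]
    (M N : Type) [AddCommGroup M] [Module Fq M] [AddCommGroup N] [Module Fq N]
    (bM : Module.Basis ιM Fq M) (bN : Module.Basis ιN Fq N)
    -- the bar involution of `ℚ(q)`, `q ↦ q⁻¹`
    (bar : Fq ≃+* Fq) (hbarq : bar qq = qq⁻¹) (hbar_invol : ∀ x, bar (bar x) = x)
    -- the `U`-weights of the members of the basis `B` of `N`
    (wtN : ιN → I →₀ ℤ)
    -- the bar involution `ψ_ι` of `M`, fixing `B^ι`
    (ψM : M → M) (hψM_add : ∀ x y, ψM (x + y) = ψM x + ψM y)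
    (hψM_smul : ∀ (c : Fq) (x : M), ψM (c • x) = bar c • ψM x)
    (hψM_fix : ∀ i, ψM (bM i) = bM i)
    -- the bar involution `ψ` of `N`, fixing `B`
    (ψN : N → N) (hψN_add : ∀ x y, ψN (x + y) = ψN x + ψN y)
    (hψN_smul : ∀ (c : Fq) (x : N), ψN (c • x) = bar c • ψN x)
    (hψN_fix : ∀ j, ψN (bN j) = bN j)
    -- the map `ψ_ι ⊗ ψ` on `M ⊗ N`
    (ψMN : M ⊗[Fq] N → M ⊗[Fq] N)
    (hψMN_add : ∀ x y, ψMN (x + y) = ψMN x + ψMN y)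
    (hψMN : ∀ (m : M) (n : N), ψMN (m ⊗ₜ[Fq] n) = ψM m ⊗ₜ[Fq] ψN n)
    -- the action on `M ⊗ N` of the components `Θ^ι_μ ∈ U^ι ⊗ U⁺_μ` of
    -- `Θ^ι = Δ(Υ)·Θ·(Υ⁻¹ ⊗ id)`
    (Θi : (I →₀ ℤ) → (M ⊗[Fq] N →ₗ[Fq] M ⊗[Fq] N))
    (hΘi_zero : Θi 0 = LinearMap.id)
    (hΘi_pos : ∀ μ : I →₀ ℤ, (¬ ∀ i, 0 ≤ μ i) → Θi μ = 0)
    -- `Θ^ι_μ ∈ U^ι ⊗ U⁺_μ`: it raises the `N`-weight exactly by `μ`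
    (hΘi_wt : ∀ μ : I →₀ ℤ, μ ≠ 0 → ∀ (i : ιM) (j : ιN),
      Θi μ (bM i ⊗ₜ[Fq] bN j) ∈ Submodule.span Fq
        {z : M ⊗[Fq] N | ∃ i' j', wtN j' = wtN j + μ ∧ z = bM i' ⊗ₜ[Fq] bN j'})
    -- integrality of `Θ^ι_μ`
    (hΘi_int : ∀ (μ : I →₀ ℤ) (i : ιM) (j : ιN) (p : ιM × ιN),
      (bM.tensorProduct bN).repr (Θi μ (bM i ⊗ₜ[Fq] bN j)) p ∈ LaurentZ)
    (hΘi_fin : ∀ x : M ⊗[Fq] N, {μ : I →₀ ℤ | Θi μ x ≠ 0}.Finite)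
    -- the new bar involution `ψ_ι := Θ^ι ∘ (ψ_ι ⊗ ψ)` on `M ⊗ N`
    (Ψ : M ⊗[Fq] N → M ⊗[Fq] N)
    (hΨ : ∀ x, Ψ x = ∑ᶠ μ : I →₀ ℤ, Θi μ (ψMN x))
    (hΨ_invol : ∀ x, Ψ (Ψ x) = x) :
    -- conclusion: `ψ_ι(b₁ ⊗ b₂) - b₁ ⊗ b₂` has coefficients in `ℤ[q,q⁻¹]`,
    -- supported on pairs `(b₁', b₂')` with `|b₂'| < |b₂|`
    ∀ (i : ιM) (j : ιN) (p : ιM × ιN),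
      (bM.tensorProduct bN).repr (Ψ (bM i ⊗ₜ[Fq] bN j) - bM i ⊗ₜ[Fq] bN j) p ∈ LaurentZ ∧
      ((bM.tensorProduct bN).repr (Ψ (bM i ⊗ₜ[Fq] bN j) - bM i ⊗ₜ[Fq] bN j) p ≠ 0 →
        wtLT (wtN p.2) (wtN j)) := by
  classical
  intro i j p
  set x : M ⊗[Fq] N := bM i ⊗ₜ[Fq] bN j with hx
  have hψx : ψMN x = x := by rw [hx, hψMN, hψM_fix, hψN_fix]
  have hfin := hΘi_fin x
  set T : Finset (I →₀ ℤ) := insert 0 hfin.toFinset with hT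
  have hsum : Ψ x = ∑ μ ∈ T, Θi μ x := by
    rw [hΨ, hψx]
    refine finsum_eq_finset_sum_of_support_subset _ ?_
    intro μ hμ
    simp only [Function.mem_support] at hμ
    exact Finset.mem_insert_of_mem (hfin.mem_toFinset.mpr hμ)
  have h0T : (0 : I →₀ ℤ) ∈ T := Finset.mem_insert_self _ _
  have hdiff : Ψ x - x = ∑ μ ∈ T.erase 0, Θi μ x := by
    rw [hsum, ← Finset.add_sum_erase _ _ h0T, hΘi_zero]
    simp
  have hrepr : (bM.tensorProduct bN).repr (Ψ x - x) p
      = ∑ μ ∈ T.erase 0, (bM.tensorProduct bN).repr (Θi μ x) p := by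
    rw [hdiff, map_sum, Finsupp.finset_sum_apply]
  constructor
  · rw [hrepr]
    exact Subring.sum_mem _ fun μ _ => hΘi_int μ i j p
  · intro hne
    rw [hrepr] at hne
    obtain ⟨μ, hμT, hμne⟩ := Finset.exists_ne_zero_of_sum_ne_zero hne
    have hμ0 : μ ≠ 0 := Finset.ne_of_mem_erase hμT
    have hpos : ∀ k, 0 ≤ μ k := by
      by_contra h
      rw [hΘi_pos μ h] at hμne
      simp at hμne
    have hwt : wtN p.2 = wtN j + μ := by
      by_contra hc
      apply hμne
      have hspan := hΘi_wt μ hμ0 i j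
      let f : M ⊗[Fq] N →ₗ[Fq] Fq :=
        (Finsupp.lapply p).comp ((bM.tensorProduct bN).repr : M ⊗[Fq] N →ₗ[Fq] _)
      have hker : Submodule.span Fq
          {z : M ⊗[Fq] N | ∃ i' j', wtN j' = wtN j + μ ∧ z = bM i' ⊗ₜ[Fq] bN j'}
          ≤ LinearMap.ker f := by
        rw [Submodule.span_le]
        rintro z ⟨i', j', hwt', rfl⟩
        have hz : bM i' ⊗ₜ[Fq] bN j' = (bM.tensorProduct bN) (i', j') :=
          (Module.Basis.tensorProduct_apply bM bN i' j').symm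
        simp only [SetLike.mem_coe, LinearMap.mem_ker, f, LinearMap.comp_apply,
          LinearEquiv.coe_coe, hz, Module.Basis.repr_self, Finsupp.lapply_apply,
          Finsupp.single_apply, ite_eq_right_iff, one_ne_zero]
        intro h
        exact absurd (by rw [← h]; exact hwt') hc
      have := hker hspan
      simpa only [LinearMap.mem_ker, f, LinearMap.comp_apply, LinearEquiv.coe_coe,
        Finsupp.lapply_apply] using this
    constructor
    · intro k
      rw [hwt, Finsupp.add_apply]
      exact le_add_of_nonneg_right (hpos k)
    · rw [hwt]
      intro h
      exact hμ0 (by simpa using h)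

end
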